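/- arXiv:0812.2733 — 2 statements merged into one kernel-verified Lean document; each statement's English description precedes it below -/
import Mathlib

section
/- Norm bound for the Dynkin–Helffer–Sjöstrand integral under a resolvent-type bound (Corollary A.5, abstract form): Let X be a Banach space, α ≥ 0, c > 0, and let N be an integer with N ≥ α + 1. Let R : ℂ∖ℝ → B(X) be continuous (in operator norm) and satisfy ‖R(z)‖ ≤ (c/|Im z|) (|z|/|Im z|)^α for all z ∉ ℝ. Fix a smooth function τ : ℝ → [0,1] with τ(s) = 1 for |s| ≤ 1 and τ(s) = 0 for |s| ≥ 2, and for Ψ ∈ C_c^∞(ℝ) define Ψ̃(x + iy) = ( Σ_{m=0}^{N} Ψ^{(m)}(x) (iy)^m / m! ) τ( y/⟨x⟩ ), where ⟨x⟩ = (1 + x²)^{1/2}, and ∂̄ = (1/2)(∂/∂x + i ∂/∂y). Then z ↦ ∂̄Ψ̃(z) R(z) is Bochner integrable on ℂ∖ℝ with respect to planar Lebesgue measure, and the operator (i/2π) ∫_ℂ ∂̄Ψ̃(z) R(z) dz̄ ∧ dz has operator norm at most c' ‖Ψ‖_{N+1}, where ‖Ψ‖_{N+1} = Σ_{m=0}^{N+1}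 ∫_ℝ |Ψ^{(m)}(x)| ⟨x⟩^{m-1} dx and c' depends only on c, α, N and τ. -/
open Set Filter MeasureTheory
noncomputable section

/-- The operator `∂̄ = (1/2)(∂/∂x + i ∂/∂y)` acting on a function on `ℂ ≅ ℝ²`. -/
def dbar (F : ℂ → ℂ) (z : ℂ) : ℂ :=
  (1/2 : ℂ) * (fderiv ℝ F z 1 + Complex.I * fderiv ℝ F z Complex.I)

/-- The explicit almost-analytic extension
`Ψ̃(x+iy) = (Σ_{m=0}^N Ψ^{(m)}(x)(iy)^m/m!) τ(y/⟨x⟩)`. -/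
def aaExt (N : ℕ) (τ : ℝ → ℝ) (Ψ : ℝ → ℂ) (z : ℂ) : ℂ :=
  (∑ m ∈ Finset.range (N+1),
      iteratedDeriv m Ψ z.re * (Complex.I * z.im) ^ m / (Nat.factorial m)) *
    ((τ (z.im / Real.sqrt (1 + z.re ^ 2)) : ℝ) : ℂ)

/-- The weighted norm `‖Ψ‖_{N+1} = Σ_{m=0}^{N+1} ∫_ℝ |Ψ^{(m)}(x)| ⟨x⟩^{m-1} dx`. -/
def psiNorm (N : ℕ) (Ψ : ℝ → ℂ) : ℝ :=
  ∑ m ∈ Finset.range (N+2),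
    ∫ x : ℝ, ‖iteratedDeriv m Ψ x‖ * Real.sqrt (1 + x ^ 2) ^ ((m : ℤ) - 1)

namespace DHSaux

lemma wt_pos (x : ℝ) : 0 < Real.sqrt (1 + x^2) := by
  apply Real.sqrt_pos.2; positivity

lemma wt_one_le (x : ℝ) : 1 ≤ Real.sqrt (1 + x^2) := by
  have := Real.sqrt_le_sqrt (show (1:ℝ) ≤ 1 + x^2 by nlinarith)
  simpa using this

lemma abs_le_wt (x : ℝ) : |x| ≤ Real.sqrt (1 + x^2) := by
  rw [← Real.sqrt_sq_eq_abs]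
  exact Real.sqrt_le_sqrt (by nlinarith)

lemma hasDerivAt_wt (x : ℝ) :
    HasDerivAt (fun x : ℝ => Real.sqrt (1 + x^2)) (x / Real.sqrt (1 + x^2)) x := by
  have h1 : HasDerivAt (fun x : ℝ => 1 + x^2) (2*x) x := by
    simpa using ((hasDerivAt_pow 2 x).const_add 1)
  have h2 := (Real.hasDerivAt_sqrt (by positivity : (1:ℝ) + x^2 ≠ 0)).comp x h1
  refine h2.congr_deriv ?_
  field_simp

lemma hasFDerivAt_comp_re {f : ℝ → ℂ} {d : ℂ} {z : ℂ} (hf : HasDerivAt f d z.re) :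
    HasFDerivAt (fun w : ℂ => f w.re) (Complex.reCLM.smulRight d) z := by
  have := hf.hasFDerivAt.comp z Complex.reCLM.hasFDerivAt
  exact this.congr_fderiv (by ext; simp)

lemma hasFDerivAt_comp_im {f : ℝ → ℂ} {d : ℂ} {z : ℂ} (hf : HasDerivAt f d z.im) :
    HasFDerivAt (fun w : ℂ => f w.im) (Complex.imCLM.smulRight d) z := by
  have := hf.hasFDerivAt.comp z Complex.imCLM.hasFDerivAt
  exact this.congr_fderiv (by ext; simp)

lemma hasFDerivAt_comp_re' {f : ℝ → ℝ} {d : ℝ} {z : ℂ} (hf : HasDerivAt f d z.re) :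
    HasFDerivAt (fun w : ℂ => f w.re) (Complex.reCLM.smulRight d) z := by
  have := hf.hasFDerivAt.comp z Complex.reCLM.hasFDerivAt
  exact this.congr_fderiv (by ext; simp)

lemma hasDerivAt_Iy_pow (m : ℕ) (y : ℝ) :
    HasDerivAt (fun y : ℝ => (Complex.I * (y:ℂ))^m)
      ((m:ℂ) * (Complex.I*(y:ℂ))^(m-1) * Complex.I) y := by
  have h1 : HasDerivAt (fun w : ℂ => Complex.I * w) Complex.I (y:ℂ) := by
    simpa using HasDerivAt.const_mul Complex.I (hasDerivAt_id (y:ℂ))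
  have h2 := (h1.pow m).comp_ofReal
  simpa [mul_comm] using h2

lemma key_telescope (a : ℕ → ℂ) (b : ℂ) (N : ℕ) :
    ∑ m ∈ Finset.range (N+1),
      (a (m+1) * b^m / (Nat.factorial m) +
        Complex.I * (a m * ((m:ℂ) * b^(m-1) * Complex.I) / (Nat.factorial m)))
    = a (N+1) * b^N / (Nat.factorial N) := by
  set e : ℕ → ℂ := fun m => a m * (m:ℂ) * b^(m-1) / (Nat.factorial m) with he
  have hterm : ∀ m, a (m+1) * b^m / (Nat.factorial m) +
      Complex.I * (a m * ((m:ℂ) * b^(m-1) * Complex.I) / (Nat.factorial m))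
      = e (m+1) - e m := by
    intro m
    have hfac : ((Nat.factorial (m+1) : ℕ) : ℂ) = ((m:ℂ)+1) * (Nat.factorial m : ℂ) := by
      push_cast [Nat.factorial_succ]; ring
    simp only [he]
    rw [hfac]
    have h1 : ((Nat.factorial m : ℕ) : ℂ) ≠ 0 := by
      exact_mod_cast Nat.cast_ne_zero.mpr (Nat.factorial_ne_zero m)
    have h2 : ((m:ℂ)+1) ≠ 0 := by
      intro h
      have := congrArg Complex.re h
      simp at this
      have : (0:ℝ) ≤ (m:ℝ) := Nat.cast_nonneg m
      linarith
    push_cast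
    field_simp
    ring_nf
    rw [Complex.I_sq]
    ring
  rw [Finset.sum_congr rfl (fun m _ => hterm m), Finset.sum_range_sub e]
  have hfac : ((Nat.factorial (N+1) : ℕ) : ℂ) = ((N:ℂ)+1) * (Nat.factorial N : ℂ) := by
    push_cast [Nat.factorial_succ]; ring
  simp only [he]
  rw [hfac]
  have h1 : ((Nat.factorial N : ℕ) : ℂ) ≠ 0 := by
    exact_mod_cast Nat.cast_ne_zero.mpr (Nat.factorial_ne_zero N)
  have h2 : ((N:ℂ)+1) ≠ 0 := by
    intro h
    have := congrArg Complex.re h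
    simp at this
    have : (0:ℝ) ≤ (N:ℝ) := Nat.cast_nonneg N
    linarith
  push_cast
  field_simp
  ring

/-- sum part of the almost analytic extension -/
def uS (N : ℕ) (Ψ : ℝ → ℂ) (z : ℂ) : ℂ :=
  ∑ m ∈ Finset.range (N+1),
    iteratedDeriv m Ψ z.re * (Complex.I * z.im) ^ m / (Nat.factorial m)

theorem dbar_aaExt (N : ℕ) (τ : ℝ → ℝ) (Ψ : ℝ → ℂ)
    (hτs : ContDiff ℝ (⊤ : ℕ∞) τ) (hΨ : ContDiff ℝ (⊤ : ℕ∞) Ψ) (z : ℂ) :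
    dbar (aaExt N τ Ψ) z =
      (1/2 : ℂ) * (iteratedDeriv (N+1) Ψ z.re * (Complex.I * z.im)^N / (Nat.factorial N)) *
        ((τ (z.im / Real.sqrt (1 + z.re ^ 2)) : ℝ) : ℂ)
      + uS N Ψ z * ((1/2 : ℂ) *
          (((deriv τ (z.im / Real.sqrt (1 + z.re ^ 2)) *
              (-(z.im * z.re) / (Real.sqrt (1 + z.re ^ 2))^3) : ℝ) : ℂ)
          + Complex.I * ((deriv τ (z.im / Real.sqrt (1 + z.re ^ 2)) /
              Real.sqrt (1 + z.re ^ 2) : ℝ) : ℂ))) := by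
  set x := z.re
  set y := z.im
  set w := Real.sqrt (1 + x^2) with hw
  have hwpos := wt_pos x
  have hterm : ∀ m : ℕ, HasFDerivAt
      (fun z : ℂ => iteratedDeriv m Ψ z.re * (Complex.I * z.im) ^ m / (Nat.factorial m))
      ((Complex.reCLM.smulRight (iteratedDeriv (m+1) Ψ x * (Complex.I * y)^m / (Nat.factorial m))) +
       (Complex.imCLM.smulRight (iteratedDeriv m Ψ x * ((m:ℂ) * (Complex.I * y)^(m-1) * Complex.I) / (Nat.factorial m)))) z := by
    intro m
    have hf : HasDerivAt (iteratedDeriv m Ψ) (iteratedDeriv (m+1) Ψ x) x := by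
      have hd : Differentiable ℝ (iteratedDeriv m Ψ) :=
        hΨ.differentiable_iteratedDeriv m (by exact_mod_cast lt_top_iff_ne_top.2 (by simp))
      have := (hd x).hasDerivAt
      rwa [← iteratedDeriv_succ] at this
    have hF : HasFDerivAt (fun w : ℂ => iteratedDeriv m Ψ w.re)
        (Complex.reCLM.smulRight (iteratedDeriv (m+1) Ψ x)) z := hasFDerivAt_comp_re hf
    have hG : HasFDerivAt (fun w : ℂ => (Complex.I * (w.im : ℂ))^m)
        (Complex.imCLM.smulRight ((m:ℂ) * (Complex.I * (y:ℂ))^(m-1) * Complex.I)) z :=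
      hasFDerivAt_comp_im (hasDerivAt_Iy_pow m y)
    have := (hF.mul hG).mul_const ((Nat.factorial m : ℂ))⁻¹
    simp only [div_eq_mul_inv]
    refine this.congr_fderiv ?_
    ext v
    simp [smul_smul]
    ring
  have h_u : HasFDerivAt (fun z : ℂ => ∑ m ∈ Finset.range (N+1),
      iteratedDeriv m Ψ z.re * (Complex.I * z.im) ^ m / (Nat.factorial m))
      (∑ m ∈ Finset.range (N+1),
        ((Complex.reCLM.smulRight (iteratedDeriv (m+1) Ψ x * (Complex.I * y)^m / (Nat.factorial m))) +
         (Complex.imCLM.smulRight (iteratedDeriv m Ψ x * ((m:ℂ) * (Complex.I * y)^(m-1) * Complex.I) / (Nat.factorial m))))) z :=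
    HasFDerivAt.fun_sum (fun m _ => hterm m)
  have h_w : HasFDerivAt (fun z : ℂ => Real.sqrt (1 + z.re^2))
      (Complex.reCLM.smulRight (x / w)) z := hasFDerivAt_comp_re' (hasDerivAt_wt x)
  have h_winv := (hasDerivAt_inv (ne_of_gt hwpos)).comp_hasFDerivAt z h_w
  have h_im : HasFDerivAt (fun z : ℂ => z.im) Complex.imCLM z := Complex.imCLM.hasFDerivAt
  have h_q : HasFDerivAt (fun z : ℂ => z.im / Real.sqrt (1 + z.re^2))
      (y • (-(w ^ 2)⁻¹ • Complex.reCLM.smulRight (x / w)) + (w)⁻¹ • Complex.imCLM) z := by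
    simp only [div_eq_mul_inv]
    exact h_im.mul h_winv
  have h_τd : HasDerivAt τ (deriv τ (y / w)) (y / w) :=
    ((hτs.differentiable (by simp)) (y / w)).hasDerivAt
  have h_v := h_τd.comp_hasFDerivAt z h_q
  have h_vC := (Complex.ofRealCLM.hasFDerivAt).comp z h_v
  have h_total := h_u.mul h_vC
  have hfd : fderiv ℝ (aaExt N τ Ψ) z =
      (∑ m ∈ Finset.range (N + 1), iteratedDeriv m Ψ x * (Complex.I * ↑y) ^ m / ↑(Nat.factorial m)) •
        Complex.ofRealCLM.comp
          (deriv τ (y / w) • (y • -(w ^ 2)⁻¹ • Complex.reCLM.smulRight (x / w) + w⁻¹ • Complex.imCLM)) +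
      ((τ (y / w) : ℝ) : ℂ) •
        ∑ m ∈ Finset.range (N + 1),
          (Complex.reCLM.smulRight (iteratedDeriv (m + 1) Ψ x * (Complex.I * ↑y) ^ m / ↑(Nat.factorial m)) +
            Complex.imCLM.smulRight
              (iteratedDeriv m Ψ x * (↑m * (Complex.I * ↑y) ^ (m - 1) * Complex.I) / ↑(Nat.factorial m))) :=
    h_total.fderiv
  simp only [dbar, hfd, ContinuousLinearMap.add_apply, ContinuousLinearMap.coe_smul',
    Pi.smul_apply, ContinuousLinearMap.comp_apply, ContinuousLinearMap.coe_sum',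
    Finset.sum_apply, ContinuousLinearMap.smulRight_apply, Complex.reCLM_apply,
    Complex.imCLM_apply, Complex.ofRealCLM_apply, Complex.one_re, Complex.one_im,
    Complex.I_re, Complex.I_im, smul_eq_mul, ContinuousLinearMap.neg_apply,
    Complex.real_smul, Complex.ofReal_mul, Complex.ofReal_neg, Complex.ofReal_div,
    Complex.ofReal_pow, Complex.ofReal_inv, one_smul, zero_smul, mul_zero, mul_one,
    zero_mul, add_zero, zero_add, Complex.ofReal_zero, Complex.ofReal_one]
  simp only [uS]
  have htel := key_telescope (fun m => iteratedDeriv m Ψ x) (Complex.I * (y:ℂ)) N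
  rw [Finset.sum_add_distrib, ← Finset.mul_sum] at htel
  push_cast
  linear_combination ((τ (y/w) : ℝ) : ℂ)/2 * htel

lemma est_rpow_ratio {α Z Y : ℝ} (hα : 0 ≤ α) (hY : 0 < Y) (h : Z ≤ 3 * Y) (hZ : 0 ≤ Z) :
    (Z / Y) ^ α ≤ 3 ^ α :=
  Real.rpow_le_rpow (div_nonneg hZ hY.le) ((div_le_iff₀ hY).2 (by linarith)) hα

lemma main_est1 {α : ℝ} {N : ℕ} (hα : 0 ≤ α) (hN : α + 1 ≤ (N:ℝ)) {w Y Z : ℝ}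
    (hw : 1 ≤ w) (hY0 : 0 < Y) (hY : Y ≤ 2 * w) (hZ0 : 0 ≤ Z) (hZ : Z ≤ 3 * w) :
    Y ^ N / Y * (Z / Y) ^ α ≤ 2 ^ ((N:ℝ) - 1 - α) * 3 ^ α * w ^ ((N:ℤ) - 1) := by
  have hwpos : 0 < w := lt_of_lt_of_le one_pos hw
  have hexp : 0 ≤ (N:ℝ) - 1 - α := by linarith
  have h1 : Y ^ N / Y * (Z / Y) ^ α = Y ^ ((N:ℝ) - 1 - α) * Z ^ α := by
    rw [Real.div_rpow hZ0 hY0.le, ← Real.rpow_natCast Y N]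
    have e1 : Y ^ ((N:ℝ)) = Y ^ ((N:ℝ)-1-α) * (Y * Y ^ α) := by
      rw [show (N:ℝ) = ((N:ℝ)-1-α) + (1 + α) by ring, Real.rpow_add hY0,
        Real.rpow_add hY0, Real.rpow_one]
      ring
    rw [e1]
    have hYα : (0:ℝ) < Y ^ α := Real.rpow_pos_of_pos hY0 α
    field_simp
  rw [h1]
  have h2 : Y ^ ((N:ℝ) - 1 - α) ≤ (2*w) ^ ((N:ℝ) - 1 - α) :=
    Real.rpow_le_rpow hY0.le hY hexp
  have h3 : Z ^ α ≤ (3*w) ^ α := Real.rpow_le_rpow hZ0 hZ hα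
  have h4 : Y ^ ((N:ℝ) - 1 - α) * Z ^ α ≤ (2*w) ^ ((N:ℝ) - 1 - α) * ((3*w) ^ α) :=
    mul_le_mul h2 h3 (Real.rpow_nonneg hZ0 α) (Real.rpow_nonneg (by positivity) _)
  refine h4.trans (le_of_eq ?_)
  rw [Real.mul_rpow (by norm_num) hwpos.le, Real.mul_rpow (by norm_num) hwpos.le]
  have h5 : w ^ ((N:ℝ)-1-α) * w ^ α = w ^ ((N:ℝ)-1) := by
    rw [← Real.rpow_add hwpos]; ring_nf
  have h6 : w ^ ((N:ℝ)-1) = w ^ ((N:ℤ)-1) := by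
    rw [← Real.rpow_intCast w ((N:ℤ)-1)]
    norm_num
  calc 2 ^ ((N:ℝ)-1-α) * w ^ ((N:ℝ)-1-α) * (3 ^ α * w ^ α)
      = 2 ^ ((N:ℝ)-1-α) * 3 ^ α * (w ^ ((N:ℝ)-1-α) * w ^ α) := by ring
    _ = 2 ^ ((N:ℝ)-1-α) * 3 ^ α * w ^ ((N:ℤ)-1) := by rw [h5, h6]

set_option maxHeartbeats 2000000 in
lemma ptwise {α c M : ℝ} {N : ℕ} (hα : 0 ≤ α) (hc : 0 < c) (hN : α + 1 ≤ (N:ℝ)) (hM0 : 0 ≤ M)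
    {τ : ℝ → ℝ} (hτr : ∀ s, τ s ∈ Icc (0:ℝ) 1) (hτ0 : ∀ s : ℝ, 2 ≤ |s| → τ s = 0)
    (hM : ∀ s, ‖deriv τ s‖ ≤ M)
    (hτd_supp : ∀ s, deriv τ s ≠ 0 → 1 ≤ |s| ∧ |s| ≤ 2)
    (κ : ℕ → ℝ)
    (hκtop : κ (N+1) = c / (2 * (Nat.factorial N)) * 2 ^ ((N:ℝ)-1-α) * 3 ^ α)
    (hκlow : ∀ m, m ≤ N → κ m = (3/2) * (M+1) * c * 3 ^ α * 2 ^ m / (Nat.factorial m))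
    (Ψ : ℝ → ℂ) (z : ℂ) (hz : z.im ≠ 0) (Rn : ℝ) (hRn0 : 0 ≤ Rn)
    (hRb : Rn ≤ c / |z.im| * (‖z‖ / |z.im|) ^ α) :
    ‖(1/2 : ℂ) * (iteratedDeriv (N+1) Ψ z.re * (Complex.I * z.im)^N / (Nat.factorial N)) *
        ((τ (z.im / Real.sqrt (1 + z.re ^ 2)) : ℝ) : ℂ)
      + uS N Ψ z * ((1/2 : ℂ) *
          (((deriv τ (z.im / Real.sqrt (1 + z.re ^ 2)) *
              (-(z.im * z.re) / (Real.sqrt (1 + z.re ^ 2))^3) : ℝ) : ℂ)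
          + Complex.I * ((deriv τ (z.im / Real.sqrt (1 + z.re ^ 2)) /
              Real.sqrt (1 + z.re ^ 2) : ℝ) : ℂ)))‖ * Rn
    ≤ ∑ m ∈ Finset.range (N+2), κ m * ‖iteratedDeriv m Ψ z.re‖ *
        (Real.sqrt (1 + z.re^2))^((m:ℤ)-2) *
        Set.indicator {p : ℝ×ℝ | |p.2| ≤ 2 * Real.sqrt (1 + p.1^2)} (fun _ => (1:ℝ)) (z.re, z.im) := by
  set x := z.re with hx
  set y := z.im with hy
  set w := Real.sqrt (1 + x^2) with hw
  have hwpos : 0 < w := wt_pos x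
  have hw1 : 1 ≤ w := wt_one_le x
  have hb : 0 < |y| := abs_pos.2 hz
  have hxw : |x| ≤ w := abs_le_wt x
  have hzabs : ‖z‖ ≤ |x| + |y| := Complex.norm_le_abs_re_add_abs_im z
  have hκpos : ∀ m, m ∈ Finset.range (N+2) → 0 ≤ κ m := by
    intro m hm
    rcases eq_or_lt_of_le (Nat.lt_succ_iff.1 (Finset.mem_range.1 hm)) with h | h
    · rw [h, hκtop]; positivity
    · rw [hκlow m (Nat.lt_succ_iff.1 h)]; positivity
  by_cases hcase : |y| ≤ 2 * w
  · -- indicator is 1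
    have hind : Set.indicator {p : ℝ×ℝ | |p.2| ≤ 2 * Real.sqrt (1 + p.1^2)}
        (fun _ => (1:ℝ)) (x, y) = 1 := by
      rw [Set.indicator_of_mem]
      exact hcase
    rw [hind]
    -- bound ‖R‖-proxy and the two pieces
    have hT : ∀ a b : ℂ, ‖a + b‖ * Rn ≤
        ‖a‖ * Rn + ‖b‖ * Rn := by
      intro a b
      rw [← add_mul]
      exact mul_le_mul_of_nonneg_right (norm_add_le a b) hRn0
    refine le_trans (hT _ _) ?_
    rw [Finset.sum_range_succ]
    have claim1 : ‖(1/2 : ℂ) * (iteratedDeriv (N+1) Ψ x * (Complex.I * y)^N / (Nat.factorial N)) *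
        ((τ (y / w) : ℝ) : ℂ)‖ * Rn ≤
        κ (N+1) * ‖iteratedDeriv (N+1) Ψ x‖ * w^(((N+1:ℕ):ℤ)-2) * 1 := by
      have hτb : |τ (y/w)| ≤ 1 := abs_le.2 ⟨by linarith [(hτr (y/w)).1], (hτr (y/w)).2⟩
      have hfacpos : (0:ℝ) < (Nat.factorial N : ℝ) := by
        exact_mod_cast Nat.factorial_pos N
      have e : ‖(1/2 : ℂ) * (iteratedDeriv (N+1) Ψ x * (Complex.I * y)^N / (Nat.factorial N)) *
          ((τ (y / w) : ℝ) : ℂ)‖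
          = 1/2 * (‖iteratedDeriv (N+1) Ψ x‖ * |y|^N / (Nat.factorial N)) * |τ (y/w)| := by
        simp [norm_mul, norm_div, norm_pow, Complex.norm_real, Complex.norm_natCast,
          Complex.norm_I]
      have hB1 : ‖(1/2 : ℂ) * (iteratedDeriv (N+1) Ψ x * (Complex.I * y)^N / (Nat.factorial N)) *
          ((τ (y / w) : ℝ) : ℂ)‖ ≤ ‖iteratedDeriv (N+1) Ψ x‖ * |y|^N / (Nat.factorial N) / 2 := by
        rw [e]
        calc 1/2 * (‖iteratedDeriv (N+1) Ψ x‖ * |y|^N / (Nat.factorial N)) * |τ (y/w)|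
            ≤ 1/2 * (‖iteratedDeriv (N+1) Ψ x‖ * |y|^N / (Nat.factorial N)) * 1 :=
              mul_le_mul_of_nonneg_left hτb (by positivity)
          _ = ‖iteratedDeriv (N+1) Ψ x‖ * |y|^N / (Nat.factorial N) / 2 := by ring
      have hmain := main_est1 hα hN hw1 hb hcase (norm_nonneg z) (by linarith)
      calc ‖(1/2 : ℂ) * (iteratedDeriv (N+1) Ψ x * (Complex.I * y)^N / (Nat.factorial N)) *
            ((τ (y / w) : ℝ) : ℂ)‖ * Rn
          ≤ (‖iteratedDeriv (N+1) Ψ x‖ * |y|^N / (Nat.factorial N) / 2) *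
            (c / |y| * (‖z‖ / |y|) ^ α) :=
            mul_le_mul hB1 hRb hRn0 (by positivity)
        _ = (c * ‖iteratedDeriv (N+1) Ψ x‖ / (2 * (Nat.factorial N))) *
            (|y| ^ N / |y| * (‖z‖ / |y|) ^ α) := by ring
        _ ≤ (c * ‖iteratedDeriv (N+1) Ψ x‖ / (2 * (Nat.factorial N))) *
            (2 ^ ((N:ℝ) - 1 - α) * 3 ^ α * w ^ ((N:ℤ) - 1)) :=
            mul_le_mul_of_nonneg_left hmain (by positivity)
        _ = κ (N+1) * ‖iteratedDeriv (N+1) Ψ x‖ * w^(((N+1:ℕ):ℤ)-2) * 1 := by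
            rw [hκtop, show (((N+1:ℕ):ℤ)-2) = ((N:ℤ)-1) by push_cast; ring]
            ring
    have claim2 : ‖uS N Ψ z * ((1/2 : ℂ) *
          (((deriv τ (y / w) * (-(y * x) / w^3) : ℝ) : ℂ)
          + Complex.I * ((deriv τ (y / w) / w : ℝ) : ℂ)))‖ * Rn ≤
        ∑ m ∈ Finset.range (N+1), κ m * ‖iteratedDeriv m Ψ x‖ * w^((m:ℤ)-2) * 1 := by
      have hsum_nonneg : (0:ℝ) ≤ ∑ m ∈ Finset.range (N+1), κ m * ‖iteratedDeriv m Ψ x‖ * w^((m:ℤ)-2) * 1 := by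
        refine Finset.sum_nonneg fun m hm => ?_
        have hκm := hκpos m (Finset.mem_range.2 (lt_trans (Finset.mem_range.1 hm) (Nat.lt_succ_self _)))
        have : (0:ℝ) < w^((m:ℤ)-2) := zpow_pos hwpos _
        positivity
      by_cases hd : deriv τ (y / w) = 0
      · have hz2 : (uS N Ψ z * ((1/2:ℂ) *
            (((deriv τ (y / w) * (-(y * x) / w^3) : ℝ) : ℂ)
            + Complex.I * ((deriv τ (y / w) / w : ℝ) : ℂ)))) = 0 := by
          rw [hd]; simp
        rw [hz2]
        simp only [norm_zero, zero_mul]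
        exact hsum_nonneg
      · obtain ⟨h1s, h2s⟩ := hτd_supp _ hd
        rw [abs_div, abs_of_pos hwpos] at h1s h2s
        have hwb : w ≤ |y| := by
          rw [le_div_iff₀ hwpos] at h1s; linarith
        have hyb : |y| ≤ 2 * w := by
          rw [div_le_iff₀ hwpos] at h2s; linarith
        -- bound on the second factor
        have habsB : ‖(1/2 : ℂ) *
            (((deriv τ (y / w) * (-(y * x) / w^3) : ℝ) : ℂ)
            + Complex.I * ((deriv τ (y / w) / w : ℝ) : ℂ))‖ ≤ (3/2) * (M+1) / w := by
          have htri : ‖((deriv τ (y / w) * (-(y * x) / w^3) : ℝ) : ℂ)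
              + Complex.I * ((deriv τ (y / w) / w : ℝ) : ℂ)‖
              ≤ |deriv τ (y / w) * (-(y * x) / w^3)| + |deriv τ (y / w) / w| := by
            refine (norm_add_le _ _).trans ?_
            rw [norm_mul, Complex.norm_I, one_mul, Complex.norm_real, Complex.norm_real, Real.norm_eq_abs, Real.norm_eq_abs]
          have hb1 : |deriv τ (y / w) * (-(y * x) / w^3)| ≤ M * (2 / w) := by
            rw [abs_mul, abs_div, abs_neg, abs_mul]
            have h1 : |y| * |x| ≤ (2*w) * w :=
              mul_le_mul hyb hxw (abs_nonneg x) (by positivity)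
            have h2 : |w^3| = w^3 := abs_of_pos (by positivity)
            rw [h2]
            have h3 : |y| * |x| / w^3 ≤ 2 / w := by
              rw [div_le_div_iff₀ (by positivity) hwpos]
              calc |y| * |x| * w ≤ (2*w*w) * w := by nlinarith [abs_nonneg x, abs_nonneg y]
                _ = 2 * w^3 := by ring
            exact mul_le_mul (hM _) h3 (by positivity) hM0
          have hb2 : |deriv τ (y / w) / w| ≤ M / w := by
            rw [abs_div, abs_of_pos hwpos]
            gcongr
            exact hM _
          calc ‖(1/2 : ℂ) * _‖ ≤ 1/2 * (M * (2/w) + M / w) := by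
                rw [norm_mul]
                have : ‖(1/2 : ℂ)‖ = 1/2 := by norm_num
                rw [this]
                exact mul_le_mul_of_nonneg_left (htri.trans (add_le_add hb1 hb2)) (by norm_num)
            _ = (3/2) * M / w := by ring
            _ ≤ (3/2) * (M+1) / w := by gcongr <;> linarith
        have habsU : ‖uS N Ψ z‖ ≤
            ∑ m ∈ Finset.range (N+1), ‖iteratedDeriv m Ψ x‖ * |y|^m / (Nat.factorial m) := by
          rw [uS]
          refine (norm_sum_le _ _).trans (Finset.sum_le_sum fun m hm => ?_)
          apply le_of_eq
          simp [norm_div, norm_mul, norm_pow, Complex.norm_I, Complex.norm_natCast,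
            Complex.norm_real]
          rfl
        have hRn2 : Rn ≤ c * 3 ^ α / w := by
          have h5 : c / |y| ≤ c / w := div_le_div_of_nonneg_left hc.le hwpos hwb
          have h6 : (‖z‖ / |y|) ^ α ≤ 3 ^ α :=
            est_rpow_ratio hα hb (by linarith) (norm_nonneg z)
          calc Rn ≤ c / |y| * (‖z‖ / |y|) ^ α := hRb
            _ ≤ (c / w) * 3 ^ α := mul_le_mul h5 h6 (Real.rpow_nonneg (by positivity) α) (by positivity)
            _ = c * 3 ^ α / w := by ring
        have hUnn : (0:ℝ) ≤ ∑ m ∈ Finset.range (N+1), ‖iteratedDeriv m Ψ x‖ * |y|^m / (Nat.factorial m) := by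
          refine Finset.sum_nonneg fun m hm => by positivity
        have per : ∀ m ∈ Finset.range (N+1),
            (‖iteratedDeriv m Ψ x‖ * |y|^m / (Nat.factorial m)) * ((3/2)*(M+1)/w * (c*3^α/w))
            ≤ κ m * ‖iteratedDeriv m Ψ x‖ * w^((m:ℤ)-2) * 1 := by
          intro m hm
          have hmN : m ≤ N := Nat.lt_succ_iff.1 (Finset.mem_range.1 hm)
          rw [hκlow m hmN, mul_one]
          have hzp : w^((m:ℤ)-2) = w^(m:ℕ) / w^2 := by
            rw [show ((m:ℤ)-2) = (m:ℤ) - (2:ℕ) by push_cast; ring,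
              zpow_sub₀ (ne_of_gt hwpos), zpow_natCast, zpow_natCast]
          rw [hzp]
          have hpw : |y|^m ≤ 2^m * w^m := by
            calc |y|^m ≤ (2*w)^m := pow_le_pow_left₀ (abs_nonneg y) hyb m
              _ = 2^m * w^m := mul_pow 2 w m
          have hfacm : (0:ℝ) < (Nat.factorial m : ℝ) := by exact_mod_cast Nat.factorial_pos m
          calc ‖iteratedDeriv m Ψ x‖ * |y|^m / (Nat.factorial m) * ((3/2)*(M+1)/w * (c*3^α/w))
              = (‖iteratedDeriv m Ψ x‖ * ((3/2)*(M+1)*c*3^α) / ((Nat.factorial m) * w^2)) * |y|^m := by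
                field_simp
            _ ≤ (‖iteratedDeriv m Ψ x‖ * ((3/2)*(M+1)*c*3^α) / ((Nat.factorial m) * w^2)) * (2^m * w^m) := by
                apply mul_le_mul_of_nonneg_left hpw
                positivity
            _ = (3/2)*(M+1)*c*3^α*2^m/(Nat.factorial m) * ‖iteratedDeriv m Ψ x‖ * (w^(m:ℕ) / w^2) := by
                field_simp
        calc ‖uS N Ψ z * ((1/2 : ℂ) *
              (((deriv τ (y / w) * (-(y * x) / w^3) : ℝ) : ℂ)
              + Complex.I * ((deriv τ (y / w) / w : ℝ) : ℂ)))‖ * Rn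
            = ‖uS N Ψ z‖ * ‖(1/2 : ℂ) *
              (((deriv τ (y / w) * (-(y * x) / w^3) : ℝ) : ℂ)
              + Complex.I * ((deriv τ (y / w) / w : ℝ) : ℂ))‖ * Rn := by rw [norm_mul]
          _ ≤ ((∑ m ∈ Finset.range (N+1), ‖iteratedDeriv m Ψ x‖ * |y|^m / (Nat.factorial m)) *
              ((3/2)*(M+1)/w)) * (c*3^α/w) := by
              apply mul_le_mul _ hRn2 hRn0 (by positivity)
              exact mul_le_mul habsU habsB (norm_nonneg _) hUnn
          _ = ∑ m ∈ Finset.range (N+1),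
              (‖iteratedDeriv m Ψ x‖ * |y|^m / (Nat.factorial m)) * ((3/2)*(M+1)/w * (c*3^α/w)) := by
              rw [mul_assoc, Finset.sum_mul]
          _ ≤ ∑ m ∈ Finset.range (N+1), κ m * ‖iteratedDeriv m Ψ x‖ * w^((m:ℤ)-2) * 1 :=
              Finset.sum_le_sum per

    linarith [claim1, claim2]
  · -- outside: everything vanishes
    push_neg at hcase
    have hτz : τ (y / w) = 0 := by
      apply hτ0
      rw [abs_div, abs_of_pos hwpos]
      rw [le_div_iff₀ hwpos]
      linarith
    have hτdz : deriv τ (y / w) = 0 := by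
      by_contra hne
      have := (hτd_supp _ hne).2
      rw [abs_div, abs_of_pos hwpos, div_le_iff₀ hwpos] at this
      linarith
    have hind : Set.indicator {p : ℝ×ℝ | |p.2| ≤ 2 * Real.sqrt (1 + p.1^2)}
        (fun _ => (1:ℝ)) (x, y) = 0 := by
      rw [Set.indicator_of_notMem]
      simp only [Set.mem_setOf_eq, not_le]
      exact hcase
    rw [hτz, hτdz, hind]
    simp

lemma wt_cont : Continuous (fun x : ℝ => Real.sqrt (1 + x^2)) := by
  exact Real.continuous_sqrt.comp (by continuity)

lemma Aset_meas : MeasurableSet {p : ℝ×ℝ | |p.2| ≤ 2 * Real.sqrt (1 + p.1^2)} :=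
  (isClosed_le (continuous_abs.comp continuous_snd)
    (continuous_const.mul (wt_cont.comp continuous_fst))).measurableSet

lemma Hm_int {κm : ℝ} (hκm : 0 ≤ κm) {f : ℝ → ℂ} (hf : Continuous f)
    (hfc : HasCompactSupport f) (k : ℤ) :
    Integrable (fun p : ℝ×ℝ => κm * ‖f p.1‖ * (Real.sqrt (1+p.1^2))^(k-2) *
      Set.indicator {p : ℝ×ℝ | |p.2| ≤ 2 * Real.sqrt (1+p.1^2)} (fun _ => (1:ℝ)) p) volume
    ∧ ∫ p : ℝ×ℝ, κm * ‖f p.1‖ * (Real.sqrt (1+p.1^2))^(k-2) *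
      Set.indicator {p : ℝ×ℝ | |p.2| ≤ 2 * Real.sqrt (1+p.1^2)} (fun _ => (1:ℝ)) p
      = 4 * κm * ∫ x : ℝ, ‖f x‖ * (Real.sqrt (1+x^2))^(k-1) := by
  set W : ℝ → ℝ := fun x => Real.sqrt (1 + x^2) with hW
  set F : ℝ → ℝ := fun x => κm * ‖f x‖ * (W x)^(k-2) with hF
  set A : Set (ℝ×ℝ) := {p : ℝ×ℝ | |p.2| ≤ 2 * W p.1} with hA
  have hWpos : ∀ x, 0 < W x := fun x => wt_pos x
  have hFc : Continuous F := by
    refine (continuous_const.mul (hf.norm)).mul ?_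
    exact wt_cont.zpow₀ (k-2) (fun x => Or.inl (ne_of_gt (hWpos x)))
  have hFnn : ∀ x, 0 ≤ F x := fun x => by
    have := (hWpos x)
    have : (0:ℝ) < (W x)^(k-2) := zpow_pos this _
    positivity
  have hslice : ∀ x : ℝ, (fun y => κm * ‖f x‖ * (W x)^(k-2) * A.indicator (fun _ => (1:ℝ)) (x, y))
      = fun y => F x * (Set.Icc (-(2 * W x)) (2 * W x)).indicator (fun _ => (1:ℝ)) y := by
    intro x
    funext y
    simp only [Set.indicator_apply, hA, Set.mem_setOf_eq, Set.mem_Icc, abs_le, hF]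
  have hind_int : ∀ x : ℝ, Integrable ((Set.Icc (-(2 * W x)) (2 * W x)).indicator (fun _ => (1:ℝ))) := by
    intro x
    rw [integrable_indicator_iff measurableSet_Icc]
    exact integrableOn_const measure_Icc_lt_top.ne
  have hind_val : ∀ x : ℝ, ∫ y : ℝ, (Set.Icc (-(2 * W x)) (2 * W x)).indicator (fun _ => (1:ℝ)) y
      = 4 * W x := by
    intro x
    rw [integral_indicator measurableSet_Icc, setIntegral_const, Real.volume_real_Icc, smul_eq_mul,
      mul_one, max_eq_left (by have := (hWpos x).le; linarith)]
    ring
  have hmeas : AEStronglyMeasurable (fun p : ℝ×ℝ => κm * ‖f p.1‖ * (W p.1)^(k-2) *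
      A.indicator (fun _ => (1:ℝ)) p) (volume : Measure (ℝ×ℝ)) := by
    refine Measurable.aestronglyMeasurable ?_
    exact ((hFc.comp continuous_fst).measurable).mul
      (measurable_const.indicator Aset_meas)
  -- the x-marginal function
  have hxfun_cont : Continuous (fun x => F x * (4 * W x)) :=
    hFc.mul (continuous_const.mul wt_cont)
  have hxfun_cs : HasCompactSupport (fun x => F x * (4 * W x)) := by
    apply HasCompactSupport.intro hfc
    intro x hx
    have : f x = 0 := image_eq_zero_of_notMem_tsupport hx
    simp [hF, this]
  have hxfun_int : Integrable (fun x => F x * (4 * W x)) :=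
    hxfun_cont.integrable_of_hasCompactSupport hxfun_cs
  have hnorm_eq : ∀ x : ℝ, (∫ y : ℝ, ‖κm * ‖f x‖ * (W x)^(k-2) * A.indicator (fun _ => (1:ℝ)) (x, y)‖)
      = F x * (4 * W x) := by
    intro x
    have h1 : ∀ y : ℝ, ‖κm * ‖f x‖ * (W x)^(k-2) * A.indicator (fun _ => (1:ℝ)) (x, y)‖
        = F x * (Set.Icc (-(2 * W x)) (2 * W x)).indicator (fun _ => (1:ℝ)) y := by
      intro y
      have := congrFun (hslice x) y
      rw [Real.norm_eq_abs, this, abs_of_nonneg]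
      apply mul_nonneg (hFnn x)
      exact Set.indicator_nonneg (fun _ _ => zero_le_one) y
    simp only [h1]
    rw [integral_const_mul, hind_val x]
  have hint : Integrable (fun p : ℝ×ℝ => κm * ‖f p.1‖ * (W p.1)^(k-2) *
      A.indicator (fun _ => (1:ℝ)) p) (volume : Measure (ℝ×ℝ)) := by
    rw [Measure.volume_eq_prod]
    rw [Measure.volume_eq_prod] at hmeas
    refine (integrable_prod_iff hmeas).2 ⟨ae_of_all _ fun x => ?_, ?_⟩
    · rw [hslice x]
      exact (hind_int x).const_mul (F x)
    · apply Integrable.congr hxfun_int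
      refine ae_of_all _ fun x => ?_
      exact (hnorm_eq x).symm
  refine ⟨hint, ?_⟩
  have hval1 : ∫ p : ℝ×ℝ, κm * ‖f p.1‖ * (W p.1)^(k-2) * A.indicator (fun _ => (1:ℝ)) p
      = ∫ x : ℝ, F x * (4 * W x) := by
    rw [Measure.volume_eq_prod]
    rw [Measure.volume_eq_prod] at hint
    rw [integral_prod _ hint]
    congr 1
    funext x
    rw [hslice x, integral_const_mul, hind_val x]
  rw [hval1]
  have hval2 : ∀ x : ℝ, F x * (4 * W x) = (4 * κm) * (‖f x‖ * (W x)^(k-1)) := by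
    intro x
    have hzp : (W x)^(k-1) = (W x)^(k-2) * W x := by
      rw [← zpow_add_one₀ (ne_of_gt (hWpos x))]
      congr 1
      ring
    rw [hzp, hF]
    ring
  calc ∫ x : ℝ, F x * (4 * W x) = ∫ x : ℝ, (4 * κm) * (‖f x‖ * (W x)^(k-1)) := by
        congr 1
        funext x
        exact hval2 x
    _ = 4 * κm * ∫ x : ℝ, ‖f x‖ * (W x)^(k-1) := integral_const_mul _ _


end DHSaux

open DHSaux

/-- Norm bound for the Dynkin–Helffer–Sjöstrand integral under a resolvent-type
bound (abstract form): the integrand is Bochner integrable on `ℂ ∖ ℝ` and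
`(i/2π) ∫_ℂ ∂̄Ψ̃(z) R(z) dz̄ ∧ dz = (-1/π) ∫∫ ∂̄Ψ̃ R dx dy` has operator norm at
most `c' ‖Ψ‖_{N+1}`, with `c'` depending only on `c`, `α`, `N` and `τ`. -/
theorem dhs_integral_norm_bound (α c : ℝ) (hα : 0 ≤ α) (hc : 0 < c) (N : ℕ)
    (hN : α + 1 ≤ (N : ℝ)) (τ : ℝ → ℝ) (hτs : ContDiff ℝ (⊤ : ℕ∞) τ)
    (hτr : ∀ s, τ s ∈ Icc (0:ℝ) 1) (hτ1 : ∀ s : ℝ, |s| ≤ 1 → τ s = 1)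
    (hτ0 : ∀ s : ℝ, 2 ≤ |s| → τ s = 0) :
    ∃ c' : ℝ, 0 < c' ∧
      ∀ (X : Type) [NormedAddCommGroup X] [NormedSpace ℂ X] [CompleteSpace X],
        ∀ R : ℂ → X →L[ℂ] X, ContinuousOn R {z : ℂ | z.im ≠ 0} →
          (∀ z : ℂ, z.im ≠ 0 →
            ‖R z‖ ≤ c / |z.im| * (‖z‖ / |z.im|) ^ α) →
          ∀ Ψ : ℝ → ℂ, ContDiff ℝ (⊤ : ℕ∞) Ψ → HasCompactSupport Ψ →
            IntegrableOn (fun z : ℂ => dbar (aaExt N τ Ψ) z • R z)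
              {z : ℂ | z.im ≠ 0} volume ∧
            ‖(-(Real.pi)⁻¹ : ℝ) •
                ∫ z in {z : ℂ | z.im ≠ 0}, dbar (aaExt N τ Ψ) z • R z‖ ≤
              c' * psiNorm N Ψ := by
  classical
  -- facts about deriv τ
  have hτC : Continuous (deriv τ) := hτs.continuous_deriv (by exact_mod_cast le_top)
  have hτd_big : ∀ s : ℝ, 2 < |s| → deriv τ s = 0 := by
    intro s hs
    have hev : τ =ᶠ[nhds s] (fun _ => (0:ℝ)) := by
      have hopen : IsOpen {t : ℝ | 2 < |t|} := isOpen_lt continuous_const continuous_abs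
      filter_upwards [hopen.mem_nhds hs] with t ht
      exact hτ0 t (le_of_lt ht)
    rw [hev.deriv_eq]
    simp
  have hτd_small : ∀ s : ℝ, |s| < 1 → deriv τ s = 0 := by
    intro s hs
    have hev : τ =ᶠ[nhds s] (fun _ => (1:ℝ)) := by
      have hopen : IsOpen {t : ℝ | |t| < 1} := isOpen_lt continuous_abs continuous_const
      filter_upwards [hopen.mem_nhds hs] with t ht
      exact hτ1 t (le_of_lt ht)
    rw [hev.deriv_eq]
    simp
  have hτd_supp : ∀ s : ℝ, deriv τ s ≠ 0 → 1 ≤ |s| ∧ |s| ≤ 2 := by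
    intro s hs
    constructor
    · by_contra h
      exact hs (hτd_small s (by linarith [not_le.1 h]))
    · by_contra h
      exact hs (hτd_big s (by linarith [not_le.1 h]))
  have hτcs : HasCompactSupport (deriv τ) := by
    apply HasCompactSupport.intro (isCompact_Icc : IsCompact (Icc (-2:ℝ) 2))
    intro s hs
    apply hτd_big
    by_contra h
    exact hs (Set.mem_Icc.2 (abs_le.1 (not_lt.1 h)))
  obtain ⟨M, hM⟩ := hτC.bounded_above_of_compact_support hτcs
  have hM0 : 0 ≤ M := le_trans (norm_nonneg _) (hM 0)
  -- the constants
  set κ : ℕ → ℝ := fun m => if m = N + 1 then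
      c / (2 * (Nat.factorial N)) * 2 ^ ((N:ℝ)-1-α) * 3 ^ α
    else (3/2) * (M+1) * c * 3 ^ α * 2 ^ m / (Nat.factorial m) with hκdef
  have hκtop : κ (N+1) = c / (2 * (Nat.factorial N)) * 2 ^ ((N:ℝ)-1-α) * 3 ^ α := by
    simp [hκdef]
  have hκlow : ∀ m, m ≤ N → κ m = (3/2) * (M+1) * c * 3 ^ α * 2 ^ m / (Nat.factorial m) := by
    intro m hm
    have : m ≠ N + 1 := by omega
    simp [hκdef, this]
  have hκnn : ∀ m, 0 ≤ κ m := by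
    intro m
    rw [hκdef]
    dsimp only
    split
    · positivity
    · positivity
  set κmax : ℝ := c / (2 * (Nat.factorial N)) * 2 ^ ((N:ℝ)-1-α) * 3 ^ α +
      (3/2) * (M+1) * c * 3 ^ α * 2 ^ (N+1) with hκmaxdef
  have hκmaxpos : 0 < κmax := by
    rw [hκmaxdef]
    have h1 : (0:ℝ) < (Nat.factorial N : ℝ) := by exact_mod_cast Nat.factorial_pos N
    positivity
  have hκle : ∀ m, m ≤ N + 1 → κ m ≤ κmax := by
    intro m hm
    rcases eq_or_lt_of_le hm with h | h
    · rw [h, hκtop, hκmaxdef]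
      have h1 : (0:ℝ) < (M+1) := by linarith
      have h2 : (0:ℝ) ≤ (3/2) * (M+1) * c * 3 ^ α * 2 ^ (N+1) := by positivity
      linarith
    · have hmN : m ≤ N := by omega
      rw [hκlow m hmN, hκmaxdef]
      have h2 : (3/2) * (M+1) * c * 3 ^ α * 2 ^ m / (Nat.factorial m)
          ≤ (3/2) * (M+1) * c * 3 ^ α * 2 ^ (N+1) := by
        have hfm : (1:ℝ) ≤ (Nat.factorial m : ℝ) := by
          exact_mod_cast Nat.one_le_iff_ne_zero.2 (Nat.factorial_ne_zero m)
        have h3 : (2:ℝ) ^ m / (Nat.factorial m) ≤ 2 ^ (N+1) := by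
          calc (2:ℝ) ^ m / (Nat.factorial m) ≤ 2 ^ m := div_le_self (by positivity) hfm
            _ ≤ 2 ^ (N+1) := by
                apply pow_le_pow_right₀ (by norm_num)
                omega
        calc (3/2) * (M+1) * c * 3 ^ α * 2 ^ m / (Nat.factorial m)
            = ((3/2) * (M+1) * c * 3 ^ α) * ((2:ℝ) ^ m / (Nat.factorial m)) := by ring
          _ ≤ ((3/2) * (M+1) * c * 3 ^ α) * 2 ^ (N+1) := by
              apply mul_le_mul_of_nonneg_left h3
              positivity
          _ = (3/2) * (M+1) * c * 3 ^ α * 2 ^ (N+1) := by ring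
      have h4 : (0:ℝ) ≤ c / (2 * (Nat.factorial N)) * 2 ^ ((N:ℝ)-1-α) * 3 ^ α := by positivity
      linarith
  refine ⟨4 * κmax / Real.pi, by positivity, ?_⟩
  intro X _ _ _ R hRc hRb Ψ hΨ hΨc
  have hSopen : IsOpen {z : ℂ | z.im ≠ 0} :=
    isOpen_compl_singleton.preimage Complex.continuous_im
  have hSmeas : MeasurableSet {z : ℂ | z.im ≠ 0} := hSopen.measurableSet
  have ham_cont : ∀ m : ℕ, Continuous (iteratedDeriv m Ψ) := fun m =>
    hΨ.continuous_iteratedDeriv m (by exact_mod_cast le_top)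
  have ham_cs : ∀ m : ℕ, HasCompactSupport (iteratedDeriv m Ψ) := by
    intro m
    induction m with
    | zero => simpa [iteratedDeriv_zero] using hΨc
    | succ n ih => rw [iteratedDeriv_succ]; exact ih.deriv
  -- the majorant
  set G : ℂ → ℝ := fun z => ∑ m ∈ Finset.range (N+2),
      κ m * ‖iteratedDeriv m Ψ z.re‖ * (Real.sqrt (1 + z.re^2))^((m:ℤ)-2) *
      Set.indicator {p : ℝ×ℝ | |p.2| ≤ 2 * Real.sqrt (1 + p.1^2)} (fun _ => (1:ℝ))
        (z.re, z.im) with hGdef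
  have hGnn : ∀ z, 0 ≤ G z := by
    intro z
    refine Finset.sum_nonneg fun m hm => ?_
    have h1 : (0:ℝ) ≤ (Real.sqrt (1 + z.re^2))^((m:ℤ)-2) :=
      (zpow_pos (wt_pos z.re) _).le
    have h2 : (0:ℝ) ≤ Set.indicator {p : ℝ×ℝ | |p.2| ≤ 2 * Real.sqrt (1 + p.1^2)}
        (fun _ => (1:ℝ)) (z.re, z.im) := Set.indicator_nonneg (fun _ _ => zero_le_one) _
    have := hκnn m
    positivity
  -- pointwise bound
  have hptw : ∀ z ∈ {z : ℂ | z.im ≠ 0}, ‖dbar (aaExt N τ Ψ) z • R z‖ ≤ G z := by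
    intro z hz
    have hz' : z.im ≠ 0 := hz
    have hns : ‖dbar (aaExt N τ Ψ) z • R z‖ = ‖dbar (aaExt N τ Ψ) z‖ * ‖R z‖ :=
      norm_smul (dbar (aaExt N τ Ψ) z) (R z)
    rw [hns, dbar_aaExt N τ Ψ hτs hΨ z]
    exact ptwise hα hc hN hM0 hτr hτ0 hM hτd_supp κ hκtop hκlow Ψ z hz' ‖R z‖
      (norm_nonneg _) (hRb z hz')
  -- continuity of the integrand on S
  have hwcont : Continuous (fun z : ℂ => Real.sqrt (1 + z.re^2)) :=
    wt_cont.comp Complex.continuous_re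
  have hqcont : Continuous (fun z : ℂ => z.im / Real.sqrt (1 + z.re^2)) :=
    Complex.continuous_im.div hwcont (fun z => (wt_pos z.re).ne')
  have hDcont : Continuous (dbar (aaExt N τ Ψ)) := by
    have heq : dbar (aaExt N τ Ψ) = fun z =>
        (1/2 : ℂ) * (iteratedDeriv (N+1) Ψ z.re * (Complex.I * z.im)^N / (Nat.factorial N)) *
          ((τ (z.im / Real.sqrt (1 + z.re ^ 2)) : ℝ) : ℂ)
        + uS N Ψ z * ((1/2 : ℂ) *
            (((deriv τ (z.im / Real.sqrt (1 + z.re ^ 2)) *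
                (-(z.im * z.re) / (Real.sqrt (1 + z.re ^ 2))^3) : ℝ) : ℂ)
            + Complex.I * ((deriv τ (z.im / Real.sqrt (1 + z.re ^ 2)) /
                Real.sqrt (1 + z.re ^ 2) : ℝ) : ℂ))) :=
      funext fun z => dbar_aaExt N τ Ψ hτs hΨ z
    rw [heq]
    have hIy : Continuous (fun z : ℂ => (Complex.I * z.im)^N) :=
      (continuous_const.mul (Complex.continuous_ofReal.comp Complex.continuous_im)).pow N
    have h1 : Continuous (fun z : ℂ =>
        (1/2 : ℂ) * (iteratedDeriv (N+1) Ψ z.re * (Complex.I * z.im)^N / (Nat.factorial N)) *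
          ((τ (z.im / Real.sqrt (1 + z.re ^ 2)) : ℝ) : ℂ)) := by
      apply Continuous.mul
      · exact continuous_const.mul
          ((((ham_cont (N+1)).comp Complex.continuous_re).mul hIy).div_const _)
      · exact Complex.continuous_ofReal.comp (hτs.continuous.comp hqcont)
    have h2 : Continuous (uS N Ψ) := by
      apply continuous_finset_sum
      intro m _
      exact (((ham_cont m).comp Complex.continuous_re).mul
        ((continuous_const.mul (Complex.continuous_ofReal.comp Complex.continuous_im)).pow m)).div_const _
    have h3 : Continuous (fun z : ℂ =>
        (deriv τ (z.im / Real.sqrt (1 + z.re ^ 2)) *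
          (-(z.im * z.re) / (Real.sqrt (1 + z.re ^ 2))^3) : ℝ)) := by
      apply Continuous.mul (hτC.comp hqcont)
      exact ((Complex.continuous_im.mul Complex.continuous_re).neg).div
        (hwcont.pow 3) (fun z => by positivity)
    have h4 : Continuous (fun z : ℂ =>
        (deriv τ (z.im / Real.sqrt (1 + z.re ^ 2)) / Real.sqrt (1 + z.re ^ 2) : ℝ)) :=
      (hτC.comp hqcont).div hwcont (fun z => (wt_pos z.re).ne')
    exact h1.add (h2.mul (continuous_const.mul
      ((Complex.continuous_ofReal.comp h3).add
        (continuous_const.mul (Complex.continuous_ofReal.comp h4)))))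
  have hfmeas : AEStronglyMeasurable (fun z : ℂ => dbar (aaExt N τ Ψ) z • R z)
      (volume.restrict {z : ℂ | z.im ≠ 0}) := by
    haveI : SecondCountableTopologyEither ℂ (X →L[ℂ] X) :=
      ⟨Or.inl inferInstance⟩
    exact ((hDcont.continuousOn.smul hRc).aestronglyMeasurable hSmeas)
  -- integrability of G
  have hHm := fun (m : ℕ) => Hm_int (hκnn m) (ham_cont m) (ham_cs m) (m : ℤ)
  have hGprod : Integrable (fun p : ℝ×ℝ => ∑ m ∈ Finset.range (N+2),
      κ m * ‖iteratedDeriv m Ψ p.1‖ * (Real.sqrt (1 + p.1^2))^((m:ℤ)-2) *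
      Set.indicator {p : ℝ×ℝ | |p.2| ≤ 2 * Real.sqrt (1 + p.1^2)} (fun _ => (1:ℝ)) p)
      volume :=
    integrable_finset_sum _ (fun m _ => (hHm m).1)
  have hGeq : G = (fun p : ℝ×ℝ => ∑ m ∈ Finset.range (N+2),
      κ m * ‖iteratedDeriv m Ψ p.1‖ * (Real.sqrt (1 + p.1^2))^((m:ℤ)-2) *
      Set.indicator {p : ℝ×ℝ | |p.2| ≤ 2 * Real.sqrt (1 + p.1^2)} (fun _ => (1:ℝ)) p) ∘
      Complex.measurableEquivRealProd := rfl
  have hGint : Integrable G (volume : Measure ℂ) := by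
    rw [hGeq]
    exact (Complex.volume_preserving_equiv_real_prod.integrable_comp_emb
      Complex.measurableEquivRealProd.measurableEmbedding).2 hGprod
  have hGval : ∫ z : ℂ, G z = ∑ m ∈ Finset.range (N+2), 4 * κ m *
      ∫ x : ℝ, ‖iteratedDeriv m Ψ x‖ * (Real.sqrt (1 + x^2))^((m:ℤ)-1) := by
    have hcomp := Complex.volume_preserving_equiv_real_prod.integral_comp
      Complex.measurableEquivRealProd.measurableEmbedding
      (fun p : ℝ×ℝ => ∑ m ∈ Finset.range (N+2),
        κ m * ‖iteratedDeriv m Ψ p.1‖ * (Real.sqrt (1 + p.1^2))^((m:ℤ)-2) *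
        Set.indicator {p : ℝ×ℝ | |p.2| ≤ 2 * Real.sqrt (1 + p.1^2)} (fun _ => (1:ℝ)) p)
    calc ∫ z : ℂ, G z
        = ∫ p : ℝ×ℝ, ∑ m ∈ Finset.range (N+2),
            κ m * ‖iteratedDeriv m Ψ p.1‖ * (Real.sqrt (1 + p.1^2))^((m:ℤ)-2) *
            Set.indicator {p : ℝ×ℝ | |p.2| ≤ 2 * Real.sqrt (1 + p.1^2)} (fun _ => (1:ℝ)) p :=
          hcomp
      _ = ∑ m ∈ Finset.range (N+2), 4 * κ m *
            ∫ x : ℝ, ‖iteratedDeriv m Ψ x‖ * (Real.sqrt (1 + x^2))^((m:ℤ)-1) := by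
          rw [integral_finset_sum _ (fun m _ => (hHm m).1)]
          exact Finset.sum_congr rfl (fun m _ => (hHm m).2)
  -- integrability of the integrand
  have hfint : IntegrableOn (fun z : ℂ => dbar (aaExt N τ Ψ) z • R z)
      {z : ℂ | z.im ≠ 0} volume := by
    refine Integrable.mono' (hGint.restrict) hfmeas ?_
    rw [ae_restrict_iff' hSmeas]
    exact ae_of_all _ hptw
  refine ⟨hfint, ?_⟩
  -- the norm bound
  have hJnn : ∀ m : ℕ, 0 ≤ ∫ x : ℝ, ‖iteratedDeriv m Ψ x‖ * (Real.sqrt (1 + x^2))^((m:ℤ)-1) := by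
    intro m
    apply integral_nonneg
    intro x
    have : (0:ℝ) ≤ (Real.sqrt (1 + x^2))^((m:ℤ)-1) := (zpow_pos (wt_pos x) _).le
    positivity
  have hpi : (0:ℝ) < Real.pi := Real.pi_pos
  have step1 : ‖∫ z in {z : ℂ | z.im ≠ 0}, dbar (aaExt N τ Ψ) z • R z‖ ≤
      ∫ z in {z : ℂ | z.im ≠ 0}, G z := by
    refine (norm_integral_le_integral_norm _).trans ?_
    exact setIntegral_mono_on hfint.norm hGint.integrableOn hSmeas hptw
  have step2 : ∫ z in {z : ℂ | z.im ≠ 0}, G z ≤ ∫ z : ℂ, G z :=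
    setIntegral_le_integral hGint (ae_of_all _ hGnn)
  have step3 : ∫ z : ℂ, G z ≤ 4 * κmax * psiNorm N Ψ := by
    rw [hGval, psiNorm, Finset.mul_sum]
    refine Finset.sum_le_sum fun m hm => ?_
    have hmle : m ≤ N + 1 := Nat.lt_succ_iff.1 (Finset.mem_range.1 hm)
    have := hκle m hmle
    have hJ := hJnn m
    nlinarith [hJnn m, hκle m hmle, hκnn m]
  have hns2 : ‖(-(Real.pi)⁻¹ : ℝ) • ∫ z in {z : ℂ | z.im ≠ 0}, dbar (aaExt N τ Ψ) z • R z‖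
      = ‖(-(Real.pi)⁻¹ : ℝ)‖ * ‖∫ z in {z : ℂ | z.im ≠ 0}, dbar (aaExt N τ Ψ) z • R z‖ :=
    norm_smul (-(Real.pi)⁻¹ : ℝ)
      (∫ z in {z : ℂ | z.im ≠ 0}, dbar (aaExt N τ Ψ) z • R z)
  rw [hns2, Real.norm_eq_abs, abs_neg, abs_inv, abs_of_pos hpi]
  calc Real.pi⁻¹ * ‖∫ z in {z : ℂ | z.im ≠ 0}, dbar (aaExt N τ Ψ) z • R z‖
      ≤ Real.pi⁻¹ * (4 * κmax * psiNorm N Ψ) := by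
        apply mul_le_mul_of_nonneg_left _ (by positivity)
        linarith [step1, step2, step3]
    _ = 4 * κmax / Real.pi * psiNorm N Ψ := by
        field_simp
end
end

section
/- Laplace-transform ray estimate underlying the L^p resolvent bound (proof of Lemma A.4): For every α ≥ 0 there exists c_α > 0 such that for every θ with 0 < |θ| < π there exists φ ∈ (−π/2, π/2) with |θ + φ| < π/2 and (1/cos φ)^α · (1/cos(θ + φ)) ≤ c_α (1/|sin θ|)^{α+1}. Consequently, for z = r e^{iθ} with r > 0 and 0 < |θ| < π, with this choice of φ, ∫_0^∞ (1/cos φ)^α e^{−ρ r cos(θ+φ)} dρ ≤ (c_α/|Im z|) ( |z|/|Im z| )^α. -/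
open Set Filter MeasureTheory Real
noncomputable section

lemma exp_integral_aux {b : ℝ} (hb : 0 < b) :
    (∫ ρ in Ioi (0:ℝ), Real.exp (-(b * ρ))) = 1 / b := by
  have := Real.integral_rpow_mul_exp_neg_mul_Ioi (a := 1) (r := b) one_pos hb
  simp only [sub_self, Real.rpow_zero, one_mul, Real.rpow_one, Real.Gamma_one,
    mul_one] at this
  exact this

/-- Laplace-transform ray estimate underlying the `L^p` resolvent bound
(proof of Lemma A.4). -/
theorem laplace_ray_estimate (α : ℝ) (hα : 0 ≤ α) :
    ∃ c > (0:ℝ), ∀ θ : ℝ, 0 < |θ| → |θ| < Real.pi →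
      ∃ φ : ℝ, -(Real.pi/2) < φ ∧ φ < Real.pi/2 ∧ |θ + φ| < Real.pi/2 ∧
        (1 / Real.cos φ) ^ α * (1 / Real.cos (θ + φ)) ≤
          c * (1 / |Real.sin θ|) ^ (α + 1) ∧
        ∀ r > (0:ℝ),
          (∫ ρ in Ioi (0:ℝ),
              (1 / Real.cos φ) ^ α * Real.exp (-(ρ * r * Real.cos (θ + φ)))) ≤
            c / |r * Real.sin θ| * (r / |r * Real.sin θ|) ^ α := by
  refine ⟨(2:ℝ) ^ (α + 1), Real.rpow_pos_of_pos two_pos _, fun θ hθ0 hθπ => ?_⟩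
  have hθ2 : |θ/2| < Real.pi/2 := by
    rw [abs_div]; simp only [abs_two]; linarith
  obtain ⟨h1, h2⟩ := abs_lt.mp hθ2
  have hsum : θ + -(θ/2) = θ/2 := by ring
  have hcospos : 0 < Real.cos (θ/2) := Real.cos_pos_of_mem_Ioo ⟨by linarith, h2⟩
  have hcosneg : Real.cos (-(θ/2)) = Real.cos (θ/2) := Real.cos_neg _
  have hsin : Real.sin θ ≠ 0 := by
    intro h
    rcases Real.sin_eq_zero_iff_of_lt_of_lt (by linarith [abs_lt.mp hθπ])
      (abs_lt.mp hθπ).2 |>.mp h with h'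
    exact absurd h' (by intro h''; rw [h''] at hθ0; simp at hθ0)
  have hsinpos : 0 < |Real.sin θ| := abs_pos.mpr hsin
  -- key: |sin θ| ≤ 2 cos(θ/2)
  have hkey : |Real.sin θ| ≤ 2 * Real.cos (θ/2) := by
    have hd : Real.sin θ = 2 * Real.sin (θ/2) * Real.cos (θ/2) := by
      rw [show θ = 2*(θ/2) from by ring, Real.sin_two_mul]; ring_nf
    rw [hd, abs_mul, abs_of_pos hcospos, abs_mul, abs_two]
    nlinarith [abs_nonneg (Real.sin (θ/2)), Real.abs_sin_le_one (θ/2)]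
  have hle : 1 / Real.cos (θ/2) ≤ 2 * (1 / |Real.sin θ|) := by
    rw [mul_one_div, div_le_div_iff₀ hcospos hsinpos]
    linarith
  refine ⟨-(θ/2), by linarith, by linarith, by rw [hsum]; exact hθ2, ?_, ?_⟩
  · rw [hsum, hcosneg]
    have hx : (0:ℝ) < 1 / Real.cos (θ/2) := by positivity
    calc (1 / Real.cos (θ/2)) ^ α * (1 / Real.cos (θ/2))
        = (1 / Real.cos (θ/2)) ^ (α + 1) := by
          rw [Real.rpow_add_one hx.ne' α]
      _ ≤ (2 * (1 / |Real.sin θ|)) ^ (α + 1) :=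
          Real.rpow_le_rpow hx.le hle (by linarith)
      _ = 2 ^ (α + 1) * (1 / |Real.sin θ|) ^ (α + 1) :=
          Real.mul_rpow (by norm_num) (by positivity)
  · intro r hr
    rw [hsum, hcosneg]
    have hb : 0 < r * Real.cos (θ/2) := by positivity
    have : (∫ ρ in Ioi (0:ℝ),
        (1 / Real.cos (θ/2)) ^ α * Real.exp (-(ρ * r * Real.cos (θ/2))))
        = (1 / Real.cos (θ/2)) ^ α * (1 / (r * Real.cos (θ/2))) := by
      rw [integral_const_mul]
      have heq : (∫ ρ in Ioi (0:ℝ), Real.exp (-(ρ * r * Real.cos (θ/2))))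
          = 1 / (r * Real.cos (θ/2)) := by
        rw [← exp_integral_aux hb]
        congr 1; ext ρ; ring_nf
      rw [heq]
    rw [this]
    have habs : |r * Real.sin θ| = r * |Real.sin θ| := by
      rw [abs_mul, abs_of_pos hr]
    rw [habs]
    have hx : (0:ℝ) < 1 / Real.cos (θ/2) := by positivity
    have h1r : 1 / (r * Real.cos (θ/2)) = (1 / Real.cos (θ/2)) * (1/r) := by
      field_simp
    calc (1 / Real.cos (θ/2)) ^ α * (1 / (r * Real.cos (θ/2)))
        = (1 / Real.cos (θ/2)) ^ (α+1) * (1/r) := by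
          rw [h1r, ← mul_assoc, Real.rpow_add_one hx.ne' α]
      _ ≤ (2 ^ (α+1) * (1 / |Real.sin θ|) ^ (α+1)) * (1/r) := by
          gcongr
          calc (1 / Real.cos (θ/2)) ^ (α+1)
              ≤ (2 * (1 / |Real.sin θ|)) ^ (α + 1) :=
                Real.rpow_le_rpow hx.le hle (by linarith)
            _ = 2 ^ (α + 1) * (1 / |Real.sin θ|) ^ (α + 1) :=
                Real.mul_rpow (by norm_num) (by positivity)
      _ = 2 ^ (α+1) / (r * |Real.sin θ|) * (r / (r * |Real.sin θ|)) ^ α := by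
          rw [show r / (r * |Real.sin θ|) = 1 / |Real.sin θ| by field_simp,
            Real.rpow_add_one (one_div_ne_zero hsinpos.ne') α]
          field_simp
end
end
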